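/- For any two skew diagrams I and J, the skew Schur functions satisfy s_I · s_J = s_{I▶J} + s_{I↑J}. -/

import Mathlib

noncomputable section

/-- A box in the plane: `(row, column)`, rows increasing downward (English notation). -/
abbrev Box : Type := ℤ × ℤ

/-- The content of a box `(i, j)` is `j - i`. -/
def boxContent (b : Box) : ℤ := b.2 - b.1

/-- An integer partition, indexed from `1` (the value `part 0` is irrelevant). -/
structure Partition' where
  part : ℕ → ℕ
  antitone : ∀ ⦃i j : ℕ⦄, i ≤ j → part j ≤ part i
  eventually_zero : ∃ N : ℕ, ∀ i : ℕ, N ≤ i → part i = 0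

/-- The skew diagram `λ/μ`: boxes `(i, j)` with `i ≥ 1` and `μ_i < j ≤ λ_i`. -/
def skewCells (lam mu : Partition') : Set Box :=
  {b : Box | 1 ≤ b.1 ∧ (mu.part b.1.toNat : ℤ) < b.2 ∧ b.2 ≤ (lam.part b.1.toNat : ℤ)}

/-- `D` is the set of boxes of a skew diagram `λ/μ` for some partitions `μ ⊆ λ`. -/
def IsSkewShape (D : Set Box) : Prop :=
  ∃ lam mu : Partition', (∀ i, mu.part i ≤ lam.part i) ∧ D = skewCells lam mu

/-- Translate a set of boxes by a vector `v`. -/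
def boxTranslate (v : Box) (D : Set Box) : Set Box := (fun b => b + v) '' D

/-- `D` is a translate of a skew diagram. -/
def IsSkewLike (D : Set Box) : Prop := ∃ v : Box, IsSkewShape (boxTranslate v D)

/-- Two boxes share a common edge. -/
def boxAdj (a b : Box) : Prop :=
  (a.1 = b.1 ∧ (a.2 = b.2 + 1 ∨ b.2 = a.2 + 1)) ∨
  (a.2 = b.2 ∧ (a.1 = b.1 + 1 ∨ b.1 = a.1 + 1))

/-- Any two boxes of `D` are joined by a path of boxes of `D` in which consecutive
boxes share a common edge. -/
def EdgewiseConnected (D : Set Box) : Prop :=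
  ∀ a ∈ D, ∀ b ∈ D, Relation.ReflTransGen (fun x y => x ∈ D ∧ y ∈ D ∧ boxAdj x y) a b

/-- `D` contains no `2 × 2` block of boxes. -/
def NoTwoByTwo (D : Set Box) : Prop :=
  ∀ b : Box, ¬(b ∈ D ∧ (b.1, b.2 + 1) ∈ D ∧ (b.1 + 1, b.2) ∈ D ∧ (b.1 + 1, b.2 + 1) ∈ D)

/-- A border strip (ribbon): a nonempty edgewise connected skew diagram (up to translation)
containing no `2 × 2` block of boxes. -/
def IsBorderStrip (B : Set Box) : Prop :=
  B.Nonempty ∧ IsSkewLike B ∧ EdgewiseConnected B ∧ NoTwoByTwo B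

/-- `b` is the starting box (lower-left end) of `B`: no box of `B` directly to its left
nor directly below it. -/
def IsStartBox (B : Set Box) (b : Box) : Prop :=
  b ∈ B ∧ (b.1, b.2 - 1) ∉ B ∧ (b.1 + 1, b.2) ∉ B

/-- `b` is the ending box (upper-right end) of `B`: no box of `B` directly above it
nor directly to its right. -/
def IsEndBox (B : Set Box) (b : Box) : Prop :=
  b ∈ B ∧ (b.1 - 1, b.2) ∉ B ∧ (b.1, b.2 + 1) ∉ B

/-- The strip `B` has starting box of content `p` and ending box of content `q`. -/
def HasPQ (B : Set Box) (p q : ℤ) : Prop :=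
  (∃ b : Box, IsStartBox B b ∧ boxContent b = p) ∧
  (∃ b : Box, IsEndBox B b ∧ boxContent b = q)

/-- An outside decomposition of `D`: a partition of the boxes of `D` into pairwise disjoint
border strips, each strip having its starting box on the left or bottom perimeter of `D` and
its ending box on the right or top perimeter of `D`. -/
def IsOutsideDecomposition (D : Set Box) (P : Set (Set Box)) : Prop :=
  (∀ θ ∈ P, IsBorderStrip θ ∧ θ ⊆ D) ∧
  (∀ b ∈ D, ∃! θ : Set Box, θ ∈ P ∧ b ∈ θ) ∧
  (∀ θ ∈ P, ∀ b : Box, IsStartBox θ b → ((b.1, b.2 - 1) ∉ D ∨ (b.1 + 1, b.2) ∉ D)) ∧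
  (∀ θ ∈ P, ∀ b : Box, IsEndBox θ b → ((b.1 - 1, b.2) ∉ D ∨ (b.1, b.2 + 1) ∉ D))

/-- The box `b` of `D` goes up in the outside decomposition `P`: in the strip of `P`
containing it, the next box is directly above it; an ending box goes up when no box of `D`
lies directly above it. -/
def GoesUp (D : Set Box) (P : Set (Set Box)) (b : Box) : Prop :=
  ∃ θ ∈ P, b ∈ θ ∧ ((b.1 - 1, b.2) ∈ θ ∨ (IsEndBox θ b ∧ (b.1 - 1, b.2) ∉ D))

/-- The box `b` of `D` goes right in the outside decomposition `P`: in the strip of `P`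
containing it, the next box is directly to its right; an ending box goes right when some box
of `D` lies directly above it. -/
def GoesRight (D : Set Box) (P : Set (Set Box)) (b : Box) : Prop :=
  ∃ θ ∈ P, b ∈ θ ∧ ((b.1, b.2 + 1) ∈ θ ∨ (IsEndBox θ b ∧ (b.1 - 1, b.2) ∈ D))

/-- `T` is a cutting strip of the outside decomposition `P` of `D`: a border strip whose
boxes are labeled by the contents of `D` (each content appearing once), in which the box
labeled `c` goes up or goes right according as the boxes of the diagonal of content `c`
of `D` go up or go right in `P`. -/
def IsCuttingStripOf (D : Set Box) (P : Set (Set Box)) (T : Set Box) : Prop :=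
  IsBorderStrip T ∧ boxContent '' T = boxContent '' D ∧
  ∀ b ∈ T, ∀ c ∈ D, boxContent c = boxContent b →
    (((b.1 - 1, b.2) ∈ T → GoesUp D P c) ∧ ((b.1, b.2 + 1) ∈ T → GoesRight D P c))

/-- The segment `φ[p, q]` of a strip `T`: its boxes of content between `p` and `q`. -/
def stripSegment (T : Set Box) (p q : ℤ) : Set Box :=
  {b ∈ T | p ≤ boxContent b ∧ boxContent b ≤ q}

/-- The box of content `c` of the strip `T` goes up (the next box is directly above it). -/
def StripGoesUpAt (T : Set Box) (c : ℤ) : Prop :=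
  ∃ b ∈ T, boxContent b = c ∧ (b.1 - 1, b.2) ∈ T

/-- The box of content `c` of the strip `T` goes right (the next box is directly right of it). -/
def StripGoesRightAt (T : Set Box) (c : ℤ) : Prop :=
  ∃ b ∈ T, boxContent b = c ∧ (b.1, b.2 + 1) ∈ T

/-- `T'` is obtained from the strip `T` by reversing the direction (up versus right) of the
box labeled `i`, keeping the directions of all other boxes. -/
def IsTwist (i : ℤ) (T T' : Set Box) : Prop :=
  boxContent '' T' = boxContent '' T ∧
  (∀ c : ℤ, c ≠ i → (StripGoesUpAt T c ↔ StripGoesUpAt T' c)) ∧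
  (StripGoesUpAt T i ↔ StripGoesRightAt T' i)

/-- The inversion number of an outside decomposition: the number of ordered pairs of
strips `(θ₁, θ₂)` with `p(θ₁) > p(θ₂)` and `q(θ₁) < q(θ₂)`. -/
def invOD (P : Set (Set Box)) : ℕ :=
  {θθ : Set Box × Set Box | θθ.1 ∈ P ∧ θθ.2 ∈ P ∧
    ∃ p₁ q₁ p₂ q₂ : ℤ, HasPQ θθ.1 p₁ q₁ ∧ HasPQ θθ.2 p₂ q₂ ∧ p₂ < p₁ ∧ q₁ < q₂}.ncard

/-- A semistandard Young tableau of shape `D`: entries (variable indices) weakly increase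
along rows and strictly increase down columns; entries outside `D` are normalized to `0`. -/
def IsSSYT (D : Set Box) (T : Box → ℕ) : Prop :=
  (∀ b ∈ D, (b.1, b.2 + 1) ∈ D → T b ≤ T (b.1, b.2 + 1)) ∧
  (∀ b ∈ D, (b.1 + 1, b.2) ∈ D → T b < T (b.1 + 1, b.2)) ∧
  (∀ b : Box, b ∉ D → T b = 0)

/-- The skew Schur function of a skew diagram `D`, as a formal power series in the
variables `x_n` (`n : ℕ`): the coefficient of a monomial `μ` is the number of semistandard
Young tableaux of shape `D` using each variable `n` exactly `μ n` times. -/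
def schur (D : Set Box) : MvPowerSeries ℕ ℤ :=
  fun μ => ({T : Box → ℕ | IsSSYT D T ∧ ∀ n : ℕ, μ n = {b ∈ D | T b = n}.ncard}.ncard : ℤ)

/-- `b` is the upper-right corner box of `D`: the rightmost box of the top row. -/
def IsUpperRightCorner (D : Set Box) (b : Box) : Prop :=
  b ∈ D ∧ (∀ c ∈ D, b.1 ≤ c.1) ∧ ∀ c ∈ D, c.1 = b.1 → c.2 ≤ b.2

/-- `b` is the lower-left corner box of `D`: the leftmost box of the bottom row. -/
def IsLowerLeftCorner (D : Set Box) (b : Box) : Prop :=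
  b ∈ D ∧ (∀ c ∈ D, c.1 ≤ b.1) ∧ ∀ c ∈ D, c.1 = b.1 → b.2 ≤ c.2

/-- The block (edgewise connected component) of `D` containing the box `a`. -/
def blockOf (D : Set Box) (a : Box) : Set Box :=
  {b : Box | Relation.ReflTransGen (fun x y => x ∈ D ∧ y ∈ D ∧ boxAdj x y) a b}

/-- The complete homogeneous symmetric function `h_r` (`h_0 = 1`, `h_r = 0` for `r < 0`):
the sum of all monomials of degree `r`. -/
def hSym (r : ℤ) : MvPowerSeries ℕ ℤ :=
  fun μ => if ((μ.sum fun _ e => e : ℕ) : ℤ) = r then 1 else 0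

/-- The elementary symmetric function `e_r` (`e_0 = 1`, `e_r = 0` for `r < 0`):
the sum of all squarefree monomials of degree `r`. -/
def eSym (r : ℤ) : MvPowerSeries ℕ ℤ :=
  fun μ => if (∀ n ∈ μ.support, μ n = 1) ∧ ((μ.sum fun _ e => e : ℕ) : ℤ) = r then 1 else 0

/-- The `j`-th part (`j ≥ 1`) of the conjugate partition: the number of indices `i ≥ 1`
with `λ_i ≥ j`. -/
def conjPart (lam : Partition') (j : ℕ) : ℕ := {i : ℕ | 1 ≤ i ∧ j ≤ lam.part i}.ncard

/-- The order on the supersymmetric alphabet `x_0 < x_1 < ⋯ < y_0 < y_1 < ⋯`,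
with `Sum.inl n` representing `x_n` and `Sum.inr n` representing `y_n`. -/
def entryLE : ℕ ⊕ ℕ → ℕ ⊕ ℕ → Prop
  | Sum.inl a, Sum.inl b => a ≤ b
  | Sum.inl _, Sum.inr _ => True
  | Sum.inr _, Sum.inl _ => False
  | Sum.inr a, Sum.inr b => a ≤ b

/-- A super tableau of shape `D`: rows and columns weakly increase, the `x`-symbols
strictly increase down columns, the `y`-symbols strictly increase along rows; entries
outside `D` are normalized to `Sum.inl 0`. -/
def IsSuperSSYT (D : Set Box) (T : Box → ℕ ⊕ ℕ) : Prop :=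
  (∀ b ∈ D, (b.1, b.2 + 1) ∈ D → entryLE (T b) (T (b.1, b.2 + 1))) ∧
  (∀ b ∈ D, (b.1 + 1, b.2) ∈ D → entryLE (T b) (T (b.1 + 1, b.2))) ∧
  (∀ b ∈ D, (b.1 + 1, b.2) ∈ D →
    ∀ a c : ℕ, T b = Sum.inl a → T (b.1 + 1, b.2) = Sum.inl c → a < c) ∧
  (∀ b ∈ D, (b.1, b.2 + 1) ∈ D →
    ∀ a c : ℕ, T b = Sum.inr a → T (b.1, b.2 + 1) = Sum.inr c → a < c) ∧
  (∀ b : Box, b ∉ D → T b = Sum.inl 0)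

/-- The supersymmetric skew Schur function `s_D(X, Y)`, as a formal power series in the
variables `x_n, y_n`: the coefficient of a monomial `μ` is the number of super tableaux
of shape `D` using each symbol `v` exactly `μ v` times. -/
def superSchur (D : Set Box) : MvPowerSeries (ℕ ⊕ ℕ) ℤ :=
  fun μ =>
    ({T : Box → ℕ ⊕ ℕ | IsSuperSSYT D T ∧
        ∀ v : ℕ ⊕ ℕ, μ v = {b ∈ D | T b = v}.ncard}.ncard : ℤ)


namespace ZP

open Set

/-! ### Generic helpers -/

lemma mem_boxTranslate {v : Box} {D : Set Box} {b : Box} :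
    b ∈ boxTranslate v D ↔ b - v ∈ D := by
  constructor
  · rintro ⟨c, hc, rfl⟩; simpa using hc
  · intro h; exact ⟨b - v, h, sub_add_cancel b v⟩

lemma mem_translate_add {v : Box} {D : Set Box} {b : Box} (h : b ∈ D) :
    b + v ∈ boxTranslate v D := ⟨b, h, rfl⟩

lemma boxTranslate_finite {v : Box} {D : Set Box} (h : D.Finite) :
    (boxTranslate v D).Finite := h.image _

/-! ### Finiteness of skew shapes -/

lemma skew_finite {D : Set Box} (h : IsSkewShape D) : D.Finite := by
  obtain ⟨lam, mu, -, rfl⟩ := h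
  obtain ⟨N, hN⟩ := lam.eventually_zero
  have hsub : skewCells lam mu ⊆ (Set.Icc (1:ℤ) N) ×ˢ (Set.Icc (1:ℤ) (lam.part 0)) := by
    rintro ⟨i, j⟩ ⟨h1, h2, h3⟩
    simp only [Set.mem_prod, Set.mem_Icc]
    have hm : (0:ℤ) ≤ (mu.part (i.toNat) : ℤ) := Int.natCast_nonneg _
    have hj1 : (1:ℤ) ≤ j := by omega
    have hiN : i.toNat < N := by
      by_contra hc
      have := hN i.toNat (by omega)
      rw [this] at h3
      simp at h3
      omega
    have hcol : lam.part i.toNat ≤ lam.part 0 := lam.antitone (Nat.zero_le _)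
    refine ⟨⟨h1, by omega⟩, hj1, ?_⟩
    calc j ≤ (lam.part i.toNat : ℤ) := h3
      _ ≤ (lam.part 0 : ℤ) := by exact_mod_cast hcol
  exact Set.Finite.subset ((Set.finite_Icc _ _).prod (Set.finite_Icc _ _)) hsub

/-! ### Half-plane bounds from corners -/

lemma upper_right_bounds {I : Set Box} {u : Box} (hI : IsSkewShape I)
    (hu : IsUpperRightCorner I u) : ∀ b ∈ I, u.1 ≤ b.1 ∧ b.2 ≤ u.2 := by
  obtain ⟨lam, mu, hle, rfl⟩ := hI
  obtain ⟨huI, hrow, hcol⟩ := hu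
  intro b hb
  refine ⟨hrow b hb, ?_⟩
  rcases eq_or_lt_of_le (hrow b hb) with heq | hlt
  · exact hcol b hb heq.symm
  · have h1 : (1:ℤ) ≤ u.1 := huI.1
    have hw : ((u.1, ((lam.part u.1.toNat : ℕ) : ℤ)) : Box) ∈ skewCells lam mu :=
      ⟨h1, lt_of_lt_of_le huI.2.1 huI.2.2, le_refl _⟩
    have hl2 : ((lam.part u.1.toNat : ℕ) : ℤ) ≤ u.2 := hcol _ hw rfl
    have hmono : lam.part b.1.toNat ≤ lam.part u.1.toNat :=
      lam.antitone (by omega)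
    calc b.2 ≤ (lam.part b.1.toNat : ℤ) := hb.2.2
      _ ≤ (lam.part u.1.toNat : ℤ) := by exact_mod_cast hmono
      _ ≤ u.2 := hl2

lemma lower_left_bounds {J : Set Box} {l : Box} (hJ : IsSkewShape J)
    (hl : IsLowerLeftCorner J l) : ∀ b ∈ J, b.1 ≤ l.1 ∧ l.2 ≤ b.2 := by
  obtain ⟨lam, mu, hle, rfl⟩ := hJ
  obtain ⟨hlJ, hrow, hcol⟩ := hl
  intro b hb
  refine ⟨hrow b hb, ?_⟩
  rcases eq_or_lt_of_le (hrow b hb) with heq | hlt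
  · exact hcol b hb heq
  · have h1 : (1:ℤ) ≤ l.1 := hlJ.1
    have hmlam : (mu.part l.1.toNat : ℤ) + 1 ≤ (lam.part l.1.toNat : ℤ) := by
      have := hlJ.2.1; have := hlJ.2.2; omega
    have hw : ((l.1, (mu.part l.1.toNat : ℤ) + 1) : Box) ∈ skewCells lam mu :=
      ⟨h1, lt_add_one _, hmlam⟩
    have hl2 : l.2 ≤ (mu.part l.1.toNat : ℤ) + 1 := hcol _ hw rfl
    have hmono : mu.part l.1.toNat ≤ mu.part b.1.toNat :=
      mu.antitone (by omega)
    have : (mu.part b.1.toNat : ℤ) < b.2 := hb.2.1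
    have : (mu.part l.1.toNat : ℤ) ≤ (mu.part b.1.toNat : ℤ) := by exact_mod_cast hmono
    omega

/-! ### Counting machinery -/

attribute [local instance] Classical.propDecidable

def cnt (S : Set Box) (T : Box → ℕ) (n : ℕ) : ℕ := {b ∈ S | T b = n}.ncard

lemma schur_apply (D : Set Box) (μ : ℕ →₀ ℕ) :
    schur D μ = (({T : Box → ℕ | IsSSYT D T ∧ ∀ n, μ n = cnt D T n}).ncard : ℤ) := rfl

def SSYTset (D : Set Box) (μ : ℕ →₀ ℕ) : Set (Box → ℕ) :=
  {T | IsSSYT D T ∧ ∀ n, μ n = cnt D T n}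

lemma finite_bounded (D : Set Box) (hD : D.Finite) (M : ℕ) :
    {T : Box → ℕ | (∀ b, b ∉ D → T b = 0) ∧ ∀ b, T b ≤ M}.Finite := by
  set F := {T : Box → ℕ | (∀ b, b ∉ D → T b = 0) ∧ ∀ b, T b ≤ M}
  have hDf : Finite ↥D := hD
  have : Finite ↥F := by
    refine Finite.of_injective
      (fun T => (fun b : D => (⟨min (T.1 b) M, by omega⟩ : Fin (M+1)))) ?_
    intro T T' h
    apply Subtype.ext
    funext b
    by_cases hb : b ∈ D
    · have := congrFun h ⟨b, hb⟩
      have h1 : T.1 b ≤ M := T.2.2 b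
      have h2 : T'.1 b ≤ M := T'.2.2 b
      simp only [Fin.mk.injEq] at this
      omega
    · rw [T.2.1 b hb, T'.2.1 b hb]
  exact Set.toFinite F

lemma ssyt_bound {D : Set Box} (hD : D.Finite) {μ : ℕ →₀ ℕ} {T : Box → ℕ}
    (hz : ∀ b, b ∉ D → T b = 0) (hcnt : ∀ n, μ n = cnt D T n) :
    ∀ b, T b ≤ μ.support.sup id := by
  intro b
  by_cases hb : b ∈ D
  · have hne : b ∈ {c ∈ D | T c = T b} := ⟨hb, rfl⟩
    have hfin : {c ∈ D | T c = T b}.Finite := hD.subset (fun c hc => hc.1)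
    have hpos : 0 < cnt D T (T b) :=
      (Set.ncard_pos hfin).mpr ⟨b, hne⟩
    have : μ (T b) ≠ 0 := by rw [hcnt (T b)]; omega
    exact Finset.le_sup (f := id) (Finsupp.mem_support_iff.mpr this)
  · rw [hz b hb]; exact Nat.zero_le _

lemma SSYTset_finite {D : Set Box} (hD : D.Finite) (μ : ℕ →₀ ℕ) :
    (SSYTset D μ).Finite := by
  refine (finite_bounded D hD (μ.support.sup id)).subset ?_
  rintro T ⟨hT, hcnt⟩
  exact ⟨hT.2.2, ssyt_bound hD hT.2.2 hcnt⟩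

lemma cnt_congr {S : Set Box} {T T' : Box → ℕ} (h : ∀ b ∈ S, T b = T' b) (n : ℕ) :
    cnt S T n = cnt S T' n := by
  unfold cnt
  congr 1
  ext b
  exact ⟨fun hb => ⟨hb.1, (h b hb.1).symm.trans hb.2⟩, fun hb => ⟨hb.1, (h b hb.1).trans hb.2⟩⟩

lemma cnt_union {I K : Set Box} (hd : Disjoint I K) (hI : I.Finite) (hK : K.Finite)
    (T : Box → ℕ) (n : ℕ) :
    cnt (I ∪ K) T n = cnt I T n + cnt K T n := by
  unfold cnt
  have hset : {b ∈ I ∪ K | T b = n} = {b ∈ I | T b = n} ∪ {b ∈ K | T b = n} := by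
    ext b
    simp only [Set.mem_setOf_eq, Set.mem_union]
    tauto
  rw [hset, Set.ncard_union_eq ?_ (hI.subset fun c hc => hc.1) (hK.subset fun c hc => hc.1)]
  exact Set.disjoint_left.mpr fun b hb hb' => (Set.disjoint_left.mp hd hb.1) hb'.1

/-! ### Restriction maps -/

def restrI (I : Set Box) (T : Box → ℕ) : Box → ℕ := fun b => if b ∈ I then T b else 0

def restrJ (J : Set Box) (v : Box) (T : Box → ℕ) : Box → ℕ :=
  fun b => if b ∈ J then T (b + v) else 0

def fmap (I J : Set Box) (v : Box) (T : Box → ℕ) : (Box → ℕ) × (Box → ℕ) :=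
  (restrI I T, restrJ J v T)

lemma cnt_translate {J : Set Box} (v : Box) (T : Box → ℕ) (n : ℕ) :
    cnt (boxTranslate v J) T n = cnt J (restrJ J v T) n := by
  unfold cnt
  have hset : {b ∈ boxTranslate v J | T b = n} =
      (fun b => b + v) '' {b ∈ J | restrJ J v T b = n} := by
    ext c
    constructor
    · rintro ⟨hc, hT⟩
      obtain ⟨b, hb, rfl⟩ := hc
      exact ⟨b, ⟨hb, by simp [restrJ, hb, hT]⟩, rfl⟩
    · rintro ⟨b, ⟨hb, hT⟩, rfl⟩
      refine ⟨mem_translate_add hb, ?_⟩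
      simpa [restrJ, hb] using hT
  rw [hset, Set.ncard_image_of_injective _ (add_left_injective v)]

lemma cnt_fmap {I J : Set Box} {v : Box} (hd : Disjoint I (boxTranslate v J))
    (hI : I.Finite) (hJ : J.Finite) (T : Box → ℕ) (n : ℕ) :
    cnt (I ∪ boxTranslate v J) T n =
      cnt I (fmap I J v T).1 n + cnt J (fmap I J v T).2 n := by
  rw [cnt_union hd hI (boxTranslate_finite hJ) T n]
  congr 1
  · exact cnt_congr (fun b hb => by simp [fmap, restrI, hb]) n
  · exact cnt_translate v T n

lemma isSSYT_restrI {D I : Set Box} (hS : I ⊆ D) {T : Box → ℕ} (hT : IsSSYT D T) :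
    IsSSYT I (restrI I T) := by
  obtain ⟨hr, hc, hz⟩ := hT
  refine ⟨?_, ?_, ?_⟩
  · intro b hb hb'
    simp only [restrI, if_pos hb, if_pos hb']
    exact hr b (hS hb) (hS hb')
  · intro b hb hb'
    simp only [restrI, if_pos hb, if_pos hb']
    exact hc b (hS hb) (hS hb')
  · intro b hb; simp [restrI, hb]

lemma shift_right (b v : Box) : ((b.1, b.2 + 1) : Box) + v = ((b + v).1, (b + v).2 + 1) := by
  ext <;> simp <;> ring

lemma shift_down (b v : Box) : ((b.1 + 1, b.2) : Box) + v = ((b + v).1 + 1, (b + v).2) := by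
  ext <;> simp <;> ring

lemma isSSYT_restrJ {D J : Set Box} {v : Box} (hS : boxTranslate v J ⊆ D)
    {T : Box → ℕ} (hT : IsSSYT D T) : IsSSYT J (restrJ J v T) := by
  obtain ⟨hr, hc, hz⟩ := hT
  refine ⟨?_, ?_, ?_⟩
  · intro b hb hb'
    simp only [restrJ, if_pos hb, if_pos hb']
    have := hr (b + v) (hS (mem_translate_add hb)) (by
      rw [← shift_right b v]; exact hS (mem_translate_add hb'))
    rwa [← shift_right b v] at this
  · intro b hb hb'
    simp only [restrJ, if_pos hb, if_pos hb']
    have := hc (b + v) (hS (mem_translate_add hb)) (by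
      rw [← shift_down b v]; exact hS (mem_translate_add hb'))
    rwa [← shift_down b v] at this
  · intro b hb; simp [restrJ, hb]

/-! ### The pair sets and the glue bijection -/

def PairSet (I J : Set Box) (C : (Box → ℕ) → (Box → ℕ) → Prop) (μ : ℕ →₀ ℕ) :
    Set ((Box → ℕ) × (Box → ℕ)) :=
  {p | IsSSYT I p.1 ∧ IsSSYT J p.2 ∧ C p.1 p.2 ∧ ∀ n, μ n = cnt I p.1 n + cnt J p.2 n}

def Ccross (I J : Set Box) (v : Box) (T₁ T₂ : Box → ℕ) : Prop :=
  (∀ b ∈ I, ((b.1, b.2 + 1) : Box) ∈ boxTranslate v J →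
    T₁ b ≤ T₂ (((b.1, b.2 + 1) : Box) - v)) ∧
  (∀ b ∈ boxTranslate v J, ((b.1 + 1, b.2) : Box) ∈ I →
    T₂ (b - v) < T₁ (b.1 + 1, b.2))

lemma glue_bijOn (I J : Set Box) (v : Box) (hIfin : I.Finite) (hJfin : J.Finite)
    (hd : Disjoint I (boxTranslate v J))
    (hIKcol : ∀ b ∈ I, ((b.1 + 1, b.2) : Box) ∉ boxTranslate v J)
    (hKIrow : ∀ b ∈ boxTranslate v J, ((b.1, b.2 + 1) : Box) ∉ I)
    (μ : ℕ →₀ ℕ) :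
    Set.BijOn (fmap I J v) (SSYTset (I ∪ boxTranslate v J) μ)
      (PairSet I J (Ccross I J v) μ) := by
  set K := boxTranslate v J with hK
  refine ⟨?_, ?_, ?_⟩
  · -- MapsTo
    rintro T ⟨hT, hcnt⟩
    refine ⟨isSSYT_restrI Set.subset_union_left hT,
            isSSYT_restrJ Set.subset_union_right hT, ⟨?_, ?_⟩, ?_⟩
    · intro b hb hmem
      have hbJ : ((b.1, b.2 + 1) : Box) - v ∈ J := mem_boxTranslate.mp hmem
      have hadd : (((b.1, b.2 + 1) : Box) - v) + v = ((b.1, b.2 + 1) : Box) := sub_add_cancel _ _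
      simp only [fmap, restrI, restrJ, if_pos hb, if_pos hbJ, hadd]
      exact hT.1 b (Set.mem_union_left _ hb) (Set.mem_union_right _ hmem)
    · intro b hb hmem
      have hbJ : b - v ∈ J := mem_boxTranslate.mp hb
      have hadd : (b - v) + v = b := sub_add_cancel _ _
      simp only [fmap, restrI, restrJ, if_pos hmem, if_pos hbJ, hadd]
      exact hT.2.1 b (Set.mem_union_right _ hb) (Set.mem_union_left _ hmem)
    · intro n
      rw [hcnt n]
      exact cnt_fmap hd hIfin hJfin T n
  · -- InjOn
    rintro T ⟨hT, -⟩ T' ⟨hT', -⟩ h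
    funext b
    by_cases hbI : b ∈ I
    · have := congrFun (congrArg Prod.fst h) b
      simpa [fmap, restrI, hbI] using this
    · by_cases hbK : b ∈ K
      · have hbJ : b - v ∈ J := mem_boxTranslate.mp hbK
        have hadd : (b - v) + v = b := sub_add_cancel _ _
        have := congrFun (congrArg Prod.snd h) (b - v)
        simpa [fmap, restrJ, hbJ, hadd] using this
      · rw [hT.2.2 b (by simpa [hbI, hK] using hbK), hT'.2.2 b (by simpa [hbI, hK] using hbK)]
  · -- SurjOn
    rintro p ⟨h1, h2, hC, hcnt⟩
    classical
    set T : Box → ℕ := fun b => if b ∈ I then p.1 b else if b ∈ K then p.2 (b - v) else 0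
      with hTdef
    have hfT : fmap I J v T = p := by
      apply Prod.ext
      · funext b
        by_cases hb : b ∈ I
        · simp [fmap, restrI, hb, hTdef]
        · simp [fmap, restrI, hb, (h1.2.2 b hb).symm]
      · funext b
        by_cases hb : b ∈ J
        · have hbvK : b + v ∈ K := mem_translate_add hb
          have hbvI : b + v ∉ I := fun hmem => Set.disjoint_left.mp hd hmem hbvK
          have hsub : (b + v) - v = b := add_sub_cancel_right b v
          simp [fmap, restrJ, hb, hTdef, hbvI, hbvK, hsub]
        · simp [fmap, restrJ, hb, (h2.2.2 b hb).symm]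
    have hTmem : T ∈ SSYTset (I ∪ K) μ := by
      refine ⟨⟨?_, ?_, ?_⟩, ?_⟩
      · -- rows
        intro b hb hb'
        rcases hb with hbI | hbK
        · rcases hb' with hbI' | hbK'
          · simp only [hTdef, if_pos hbI, if_pos hbI']
            exact h1.1 b hbI hbI'
          · have hnb' : ((b.1, b.2+1) : Box) ∉ I :=
              fun hmem => Set.disjoint_left.mp hd hmem hbK'
            simp only [hTdef, if_pos hbI, if_neg hnb', if_pos hbK']
            exact hC.1 b hbI hbK'
        · have hnbI : b ∉ I := fun hmem => Set.disjoint_left.mp hd hmem hbK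
          rcases hb' with hbI' | hbK'
          · exact absurd hbI' (hKIrow b hbK)
          · have hnb'I : ((b.1, b.2 + 1) : Box) ∉ I :=
              fun hmem => Set.disjoint_left.mp hd hmem hbK'
            simp only [hTdef, if_neg hnbI, if_pos hbK, if_neg hnb'I, if_pos hbK']
            have hbJ : b - v ∈ J := mem_boxTranslate.mp hbK
            have hbJ' : ((b.1, b.2 + 1) : Box) - v = ((b - v).1, (b - v).2 + 1) := by
              ext <;> simp <;> ring
            have hmem2 : (((b - v).1, (b - v).2 + 1) : Box) ∈ J := by
              rw [← hbJ']; exact mem_boxTranslate.mp hbK'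
            have := h2.1 (b - v) hbJ hmem2
            rwa [← hbJ'] at this
      · -- cols
        intro b hb hb'
        rcases hb with hbI | hbK
        · rcases hb' with hbI' | hbK'
          · simp only [hTdef, if_pos hbI, if_pos hbI']
            exact h1.2.1 b hbI hbI'
          · exact absurd hbK' (hIKcol b hbI)
        · have hnbI : b ∉ I := fun hmem => Set.disjoint_left.mp hd hmem hbK
          rcases hb' with hbI' | hbK'
          · simp only [hTdef, if_neg hnbI, if_pos hbK, if_pos hbI']
            exact hC.2 b hbK hbI'
          · have hnb'I : ((b.1+1, b.2) : Box) ∉ I :=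
              fun hmem => Set.disjoint_left.mp hd hmem hbK'
            simp only [hTdef, if_neg hnbI, if_pos hbK, if_neg hnb'I, if_pos hbK']
            have hbJ : b - v ∈ J := mem_boxTranslate.mp hbK
            have hbJ' : ((b.1+1, b.2) : Box) - v = ((b-v).1 + 1, (b-v).2) := by
              ext <;> simp <;> ring
            have hmem2 : (((b-v).1 + 1, (b-v).2) : Box) ∈ J := by
              rw [← hbJ']; exact mem_boxTranslate.mp hbK'
            have := h2.2.1 (b - v) hbJ hmem2
            rwa [← hbJ'] at this
      · -- zero outside
        intro b hb
        simp only [Set.mem_union, not_or] at hb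
        simp [hTdef, hb.1, hb.2]
      · -- content
        intro n
        rw [cnt_fmap hd hIfin hJfin T n, hfT]
        exact hcnt n
    exact ⟨T, hTmem, hfT⟩

/-! ### Cardinality lemmas -/

lemma ncard_prod {α β : Type*} (s : Set α) (t : Set β) :
    (s ×ˢ t).ncard = s.ncard * t.ncard := by
  rw [← Nat.card_coe_set_eq, ← Nat.card_coe_set_eq, ← Nat.card_coe_set_eq, ← Nat.card_prod]
  exact Nat.card_congr (Equiv.Set.prod s t)

lemma ncard_finset_biUnion {α β : Type*} (s : Finset α) (f : α → Set β)
    (hf : ∀ a ∈ s, (f a).Finite)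
    (hdisj : ∀ a ∈ s, ∀ b ∈ s, a ≠ b → Disjoint (f a) (f b)) :
    (⋃ a ∈ s, f a).ncard = ∑ a ∈ s, (f a).ncard := by
  classical
  induction s using Finset.induction_on with
  | empty => simp
  | @insert a s ha ih =>
    have hfa := hf a (Finset.mem_insert_self a s)
    have hfs : ∀ b ∈ s, (f b).Finite := fun b hb => hf b (Finset.mem_insert_of_mem hb)
    have hds : ∀ x ∈ s, ∀ y ∈ s, x ≠ y → Disjoint (f x) (f y) := fun x hx y hy =>
      hdisj x (Finset.mem_insert_of_mem hx) y (Finset.mem_insert_of_mem hy)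
    have hUfin : (⋃ b ∈ s, f b).Finite := Set.Finite.biUnion s.finite_toSet hfs
    have hdisj2 : Disjoint (f a) (⋃ b ∈ s, f b) := by
      simp only [Set.disjoint_iUnion_right]
      intro b hb
      exact hdisj a (Finset.mem_insert_self a s) b (Finset.mem_insert_of_mem hb)
        (by rintro rfl; exact ha hb)
    rw [Finset.set_biUnion_insert, Set.ncard_union_eq hdisj2 hfa hUfin,
        Finset.sum_insert ha, ih hfs hds]

lemma bound_of_cnt {D : Set Box} (hD : D.Finite) {μ : ℕ →₀ ℕ} {T : Box → ℕ}
    (hz : ∀ b, b ∉ D → T b = 0) (h : ∀ n, 0 < cnt D T n → μ n ≠ 0) :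
    ∀ b, T b ≤ μ.support.sup id := by
  intro b
  by_cases hb : b ∈ D
  · have hne : b ∈ {c ∈ D | T c = T b} := ⟨hb, rfl⟩
    have hfin : {c ∈ D | T c = T b}.Finite := hD.subset (fun c hc => hc.1)
    have hpos : 0 < cnt D T (T b) := (Set.ncard_pos hfin).mpr ⟨b, hne⟩
    exact Finset.le_sup (f := id) (Finsupp.mem_support_iff.mpr (h _ hpos))
  · rw [hz b hb]; exact Nat.zero_le _

lemma pairSet_finite {I J : Set Box} (hI : I.Finite) (hJ : J.Finite)
    (C : (Box → ℕ) → (Box → ℕ) → Prop) (μ : ℕ →₀ ℕ) :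
    (PairSet I J C μ).Finite := by
  refine ((finite_bounded I hI (μ.support.sup id)).prod
    (finite_bounded J hJ (μ.support.sup id))).subset ?_
  rintro ⟨T₁, T₂⟩ ⟨h1, h2, -, hcnt⟩
  refine ⟨⟨h1.2.2, bound_of_cnt hI h1.2.2 (fun n hn => ?_)⟩,
          ⟨h2.2.2, bound_of_cnt hJ h2.2.2 (fun n hn => ?_)⟩⟩
  · rw [hcnt n]; omega
  · rw [hcnt n]; omega

lemma pairSet_congr {I J : Set Box} {C C' : (Box → ℕ) → (Box → ℕ) → Prop}
    (h : ∀ T₁ T₂, C T₁ T₂ ↔ C' T₁ T₂) (μ : ℕ →₀ ℕ) :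
    PairSet I J C μ = PairSet I J C' μ := by
  ext p
  simp only [PairSet, Set.mem_setOf_eq, h p.1 p.2]

lemma pairSet_union {I J : Set Box} (u l : Box) (μ : ℕ →₀ ℕ) :
    PairSet I J (fun a b => a u ≤ b l) μ ∪ PairSet I J (fun a b => b l < a u) μ =
      PairSet I J (fun _ _ => True) μ := by
  ext p
  simp only [PairSet, Set.mem_union, Set.mem_setOf_eq]
  by_cases h : p.1 u ≤ p.2 l
  · tauto
  · have : p.2 l < p.1 u := by omega
    tauto

lemma pairSet_disjoint {I J : Set Box} (u l : Box) (μ : ℕ →₀ ℕ) :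
    Disjoint (PairSet I J (fun a b => a u ≤ b l) μ)
      (PairSet I J (fun a b => b l < a u) μ) := by
  rw [Set.disjoint_left]
  rintro p ⟨-, -, hle, -⟩ ⟨-, -, hlt, -⟩
  omega

lemma pairSet_true_eq (I J : Set Box) (μ : ℕ →₀ ℕ) :
    PairSet I J (fun _ _ => True) μ =
      ⋃ q ∈ Finset.HasAntidiagonal.antidiagonal μ, (SSYTset I q.1 ×ˢ SSYTset J q.2) := by
  ext p
  simp only [Set.mem_iUnion, Finset.HasAntidiagonal.mem_antidiagonal, Set.mem_prod, exists_prop]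
  constructor
  · rintro ⟨h1, h2, -, hcnt⟩
    refine ⟨(Finsupp.onFinset μ.support (fun n => cnt I p.1 n)
        (fun n hn => Finsupp.mem_support_iff.mpr (by
          replace hn : cnt I p.1 n ≠ 0 := hn; rw [hcnt n]; omega)),
      Finsupp.onFinset μ.support (fun n => cnt J p.2 n)
        (fun n hn => Finsupp.mem_support_iff.mpr (by
          replace hn : cnt J p.2 n ≠ 0 := hn; rw [hcnt n]; omega))),
      ?_, ⟨h1, fun n => by simp [Finsupp.onFinset_apply]⟩,
      ⟨h2, fun n => by simp [Finsupp.onFinset_apply]⟩⟩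
    ext n
    simp only [Finsupp.add_apply, Finsupp.onFinset_apply]
    exact (hcnt n).symm
  · rintro ⟨q, hq, ⟨h1, hc1⟩, h2, hc2⟩
    refine ⟨h1, h2, trivial, fun n => ?_⟩
    rw [← hq]
    simp only [Finsupp.add_apply]
    rw [hc1 n, hc2 n]

lemma pairSet_true_ncard {I J : Set Box} (hI : I.Finite) (hJ : J.Finite) (μ : ℕ →₀ ℕ) :
    (PairSet I J (fun _ _ => True) μ).ncard =
      ∑ q ∈ Finset.HasAntidiagonal.antidiagonal μ, (SSYTset I q.1).ncard * (SSYTset J q.2).ncard := by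
  rw [pairSet_true_eq I J μ, ncard_finset_biUnion]
  · exact Finset.sum_congr rfl fun q _ => ncard_prod _ _
  · exact fun q _ => (SSYTset_finite hI q.1).prod (SSYTset_finite hJ q.2)
  · intro q hq q' hq' hne
    rw [Set.disjoint_left]
    rintro p ⟨⟨-, hc1⟩, -, hc2⟩ ⟨⟨-, hc1'⟩, -, hc2'⟩
    apply hne
    exact Prod.ext (Finsupp.ext fun n => (hc1 n).trans (hc1' n).symm)
      (Finsupp.ext fun n => (hc2 n).trans (hc2' n).symm)

/-! ### Characterization of the cross conditions -/

lemma ccross_right {I J : Set Box} {u l : Box}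
    (hIu : ∀ b ∈ I, u.1 ≤ b.1 ∧ b.2 ≤ u.2)
    (hJl : ∀ b ∈ J, b.1 ≤ l.1 ∧ l.2 ≤ b.2)
    (huI : u ∈ I) (hlJ : l ∈ J) (T₁ T₂ : Box → ℕ) :
    Ccross I J (u.1 - l.1, u.2 + 1 - l.2) T₁ T₂ ↔ T₁ u ≤ T₂ l := by
  set v : Box := (u.1 - l.1, u.2 + 1 - l.2) with hv
  have hsubl : ((u.1, u.2 + 1) : Box) - v = l := by
    ext
    · show u.1 - (u.1 - l.1) = l.1; ring
    · show u.2 + 1 - (u.2 + 1 - l.2) = l.2; ring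
  have hKbound : ∀ b ∈ boxTranslate v J, b.1 ≤ u.1 ∧ u.2 + 1 ≤ b.2 := by
    intro b hb
    have h := hJl _ (mem_boxTranslate.mp hb)
    have h1 : (b - v).1 = b.1 - (u.1 - l.1) := rfl
    have h2 : (b - v).2 = b.2 - (u.2 + 1 - l.2) := rfl
    rw [h1, h2] at h
    omega
  constructor
  · intro h
    have hmem : ((u.1, u.2 + 1) : Box) ∈ boxTranslate v J := by
      rw [mem_boxTranslate, hsubl]; exact hlJ
    have := h.1 u huI hmem
    rwa [hsubl] at this
  · intro h
    constructor
    · intro b hb hmem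
      have h1 := hIu b hb
      have h2 := hKbound _ hmem
      have hb1 : ((b.1, b.2 + 1) : Box).1 = b.1 := rfl
      have hb2 : ((b.1, b.2 + 1) : Box).2 = b.2 + 1 := rfl
      rw [hb1, hb2] at h2
      have hbu : b = u := Prod.ext (by omega) (by omega)
      rw [hbu, hsubl]
      exact h
    · intro b hb hmem
      have h1 := hIu _ hmem
      have h2 := hKbound b hb
      have : ((b.1 + 1, b.2) : Box).2 = b.2 := rfl
      rw [this] at h1
      omega

lemma ccross_up {I J : Set Box} {u l : Box}
    (hIu : ∀ b ∈ I, u.1 ≤ b.1 ∧ b.2 ≤ u.2)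
    (hJl : ∀ b ∈ J, b.1 ≤ l.1 ∧ l.2 ≤ b.2)
    (huI : u ∈ I) (hlJ : l ∈ J) (T₁ T₂ : Box → ℕ) :
    Ccross I J (u.1 - 1 - l.1, u.2 - l.2) T₁ T₂ ↔ T₂ l < T₁ u := by
  set v : Box := (u.1 - 1 - l.1, u.2 - l.2) with hv
  have hsubl : ((u.1 - 1, u.2) : Box) - v = l := by
    ext
    · show u.1 - 1 - (u.1 - 1 - l.1) = l.1; ring
    · show u.2 - (u.2 - l.2) = l.2; ring
  have hup : (((u.1 - 1 : ℤ), u.2).1 + 1, ((u.1 - 1 : ℤ), u.2).2) = u := by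
    apply Prod.ext
    · show u.1 - 1 + 1 = u.1; ring
    · rfl
  have hKbound : ∀ b ∈ boxTranslate v J, b.1 ≤ u.1 - 1 ∧ u.2 ≤ b.2 := by
    intro b hb
    have h := hJl _ (mem_boxTranslate.mp hb)
    have h1 : (b - v).1 = b.1 - (u.1 - 1 - l.1) := rfl
    have h2 : (b - v).2 = b.2 - (u.2 - l.2) := rfl
    rw [h1, h2] at h
    omega
  constructor
  · intro h
    have hmem : ((u.1 - 1, u.2) : Box) ∈ boxTranslate v J := by
      rw [mem_boxTranslate, hsubl]; exact hlJ
    have := h.2 (u.1 - 1, u.2) hmem (by rw [hup]; exact huI)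
    rwa [hsubl, hup] at this
  · intro h
    constructor
    · intro b hb hmem
      have h1 := hIu b hb
      have h2 := hKbound _ hmem
      have hb1 : ((b.1, b.2 + 1) : Box).1 = b.1 := rfl
      rw [hb1] at h2
      omega
    · intro b hb hmem
      have h1 := hIu _ hmem
      have h2 := hKbound b hb
      have hc1 : ((b.1 + 1, b.2) : Box).1 = b.1 + 1 := rfl
      have hc2 : ((b.1 + 1, b.2) : Box).2 = b.2 := rfl
      rw [hc1, hc2] at h1
      have hbeq : b = ((u.1 - 1, u.2) : Box) := Prod.ext (by omega) (by omega)
      have hbeq2 : ((b.1 + 1, b.2) : Box) = u := Prod.ext (by show b.1 + 1 = u.1; omega) (by show b.2 = u.2; omega)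
      rw [hbeq2, hbeq, hsubl]
      exact h

lemma glue_geometry_right {I J : Set Box} {u l : Box}
    (hIu : ∀ b ∈ I, u.1 ≤ b.1 ∧ b.2 ≤ u.2)
    (hJl : ∀ b ∈ J, b.1 ≤ l.1 ∧ l.2 ≤ b.2) :
    Disjoint I (boxTranslate (u.1 - l.1, u.2 + 1 - l.2) J) ∧
    (∀ b ∈ I, ((b.1 + 1, b.2) : Box) ∉ boxTranslate (u.1 - l.1, u.2 + 1 - l.2) J) ∧
    (∀ b ∈ boxTranslate (u.1 - l.1, u.2 + 1 - l.2) J, ((b.1, b.2 + 1) : Box) ∉ I) := by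
  set v : Box := (u.1 - l.1, u.2 + 1 - l.2) with hv
  have hKbound : ∀ b ∈ boxTranslate v J, b.1 ≤ u.1 ∧ u.2 + 1 ≤ b.2 := by
    intro b hb
    have h := hJl _ (mem_boxTranslate.mp hb)
    have h1 : (b - v).1 = b.1 - (u.1 - l.1) := rfl
    have h2 : (b - v).2 = b.2 - (u.2 + 1 - l.2) := rfl
    rw [h1, h2] at h
    omega
  refine ⟨Set.disjoint_left.mpr fun b hb hb' => ?_, fun b hb hb' => ?_, fun b hb hb' => ?_⟩
  · have := hIu b hb; have := hKbound b hb'; omega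
  · have h1 := hIu b hb
    have h2 := hKbound _ hb'
    have : ((b.1 + 1, b.2) : Box).2 = b.2 := rfl
    rw [this] at h2
    omega
  · have h1 := hIu _ hb'
    have h2 := hKbound b hb
    have : ((b.1, b.2 + 1) : Box).2 = b.2 + 1 := rfl
    rw [this] at h1
    omega

lemma glue_geometry_up {I J : Set Box} {u l : Box}
    (hIu : ∀ b ∈ I, u.1 ≤ b.1 ∧ b.2 ≤ u.2)
    (hJl : ∀ b ∈ J, b.1 ≤ l.1 ∧ l.2 ≤ b.2) :
    Disjoint I (boxTranslate (u.1 - 1 - l.1, u.2 - l.2) J) ∧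
    (∀ b ∈ I, ((b.1 + 1, b.2) : Box) ∉ boxTranslate (u.1 - 1 - l.1, u.2 - l.2) J) ∧
    (∀ b ∈ boxTranslate (u.1 - 1 - l.1, u.2 - l.2) J, ((b.1, b.2 + 1) : Box) ∉ I) := by
  set v : Box := (u.1 - 1 - l.1, u.2 - l.2) with hv
  have hKbound : ∀ b ∈ boxTranslate v J, b.1 ≤ u.1 - 1 ∧ u.2 ≤ b.2 := by
    intro b hb
    have h := hJl _ (mem_boxTranslate.mp hb)
    have h1 : (b - v).1 = b.1 - (u.1 - 1 - l.1) := rfl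
    have h2 : (b - v).2 = b.2 - (u.2 - l.2) := rfl
    rw [h1, h2] at h
    omega
  refine ⟨Set.disjoint_left.mpr fun b hb hb' => ?_, fun b hb hb' => ?_, fun b hb hb' => ?_⟩
  · have := hIu b hb; have := hKbound b hb'; omega
  · have h1 := hIu b hb
    have h2 := hKbound _ hb'
    have : ((b.1 + 1, b.2) : Box).1 = b.1 + 1 := rfl
    rw [this] at h2
    omega
  · have h1 := hIu _ hb'
    have h2 := hKbound b hb
    have : ((b.1, b.2 + 1) : Box).1 = b.1 := rfl
    rw [this] at h1
    omega

end ZP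

/-- **Zelevinsky's product rule.** For skew diagrams `I` and `J`,
`s_I · s_J = s_{I▶J} + s_{I↑J}`, where `I▶J` glues the lower-left corner box of `J`
directly to the right of the upper-right corner box of `I`, and `I↑J` glues it directly on
top of that box. -/
theorem schur_mul_eq_glue
    (I J : Set Box) (hI : IsSkewShape I) (hJ : IsSkewShape J)
    (hIne : I.Nonempty) (hJne : J.Nonempty)
    (u l : Box) (hu : IsUpperRightCorner I u) (hl : IsLowerLeftCorner J l) :
    schur I * schur J =
      schur (I ∪ boxTranslate (u.1 - l.1, u.2 + 1 - l.2) J) +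
      schur (I ∪ boxTranslate (u.1 - 1 - l.1, u.2 - l.2) J) := by
  classical
  have hIfin := ZP.skew_finite hI
  have hJfin := ZP.skew_finite hJ
  have hIu := ZP.upper_right_bounds hI hu
  have hJl := ZP.lower_left_bounds hJ hl
  obtain ⟨hd₁, hIK₁, hKI₁⟩ := ZP.glue_geometry_right hIu hJl
  obtain ⟨hd₂, hIK₂, hKI₂⟩ := ZP.glue_geometry_up hIu hJl
  funext μ
  have b₁ := ZP.glue_bijOn I J (u.1 - l.1, u.2 + 1 - l.2) hIfin hJfin hd₁ hIK₁ hKI₁ μ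
  have b₂ := ZP.glue_bijOn I J (u.1 - 1 - l.1, u.2 - l.2) hIfin hJfin hd₂ hIK₂ hKI₂ μ
  have e₁ : (ZP.SSYTset (I ∪ boxTranslate (u.1 - l.1, u.2 + 1 - l.2) J) μ).ncard
      = (ZP.PairSet I J (fun a b => a u ≤ b l) μ).ncard := by
    rw [← Set.ncard_image_of_injOn b₁.injOn, b₁.image_eq,
        ZP.pairSet_congr (ZP.ccross_right hIu hJl hu.1 hl.1) μ]
  have e₂ : (ZP.SSYTset (I ∪ boxTranslate (u.1 - 1 - l.1, u.2 - l.2) J) μ).ncard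
      = (ZP.PairSet I J (fun a b => b l < a u) μ).ncard := by
    rw [← Set.ncard_image_of_injOn b₂.injOn, b₂.image_eq,
        ZP.pairSet_congr (ZP.ccross_up hIu hJl hu.1 hl.1) μ]
  have key : (ZP.PairSet I J (fun a b => a u ≤ b l) μ).ncard
      + (ZP.PairSet I J (fun a b => b l < a u) μ).ncard
      = ∑ q ∈ Finset.HasAntidiagonal.antidiagonal μ,
          (ZP.SSYTset I q.1).ncard * (ZP.SSYTset J q.2).ncard := by
    rw [← Set.ncard_union_eq (ZP.pairSet_disjoint u l μ)
        (ZP.pairSet_finite hIfin hJfin _ μ) (ZP.pairSet_finite hIfin hJfin _ μ),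
        ZP.pairSet_union u l μ, ZP.pairSet_true_ncard hIfin hJfin μ]
  have hmul : (schur I * schur J) μ
      = ∑ q ∈ Finset.HasAntidiagonal.antidiagonal μ,
          ((ZP.SSYTset I q.1).ncard : ℤ) * ((ZP.SSYTset J q.2).ncard : ℤ) :=
    MvPowerSeries.coeff_mul μ (schur I) (schur J)
  have hrhs : (schur (I ∪ boxTranslate (u.1 - l.1, u.2 + 1 - l.2) J) +
      schur (I ∪ boxTranslate (u.1 - 1 - l.1, u.2 - l.2) J)) μ
      = ((ZP.SSYTset (I ∪ boxTranslate (u.1 - l.1, u.2 + 1 - l.2) J) μ).ncard : ℤ)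
      + ((ZP.SSYTset (I ∪ boxTranslate (u.1 - 1 - l.1, u.2 - l.2) J) μ).ncard : ℤ) := rfl
  rw [hmul, hrhs, e₁, e₂, ← Nat.cast_add, key]
  push_cast
  rfl
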